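/- Let V be a finite set, G ⊆ V × V a reflexive edge relation, and Y, Z two probability distributions on V such that for every W ⊆ V, Z(W) ≤ Y(W) + Y(N(W)). Then there exists a stochastic matrix P on V with P_{j,i} = 0 whenever (i,j) ∉ G, such that Z = P Y. (Locality implies simulability by a local stochastic matrix.) -/

import Mathlib

open Finset

section Aux
variable {V : Type*} [Fintype V] [DecidableEq V]

/-- Reachability by augmenting paths in the bipartite flow network:
`Sum.inr j` means sink `j` is reachable from the deficient sink `j0`,
`Sum.inl i` means source `i` is reachable. -/
inductive SimReach (G : V → V → Prop) (f : V → V → ℝ) (j0 : V) : V ⊕ V → Prop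
  | base : SimReach G f j0 (Sum.inr j0)
  | toA {i j : V} : SimReach G f j0 (Sum.inr j) → G i j → SimReach G f j0 (Sum.inl i)
  | toB {i j : V} : SimReach G f j0 (Sum.inl i) → 0 < f i j → SimReach G f j0 (Sum.inr j)

/-- Row-sum adjustment prescribed by an augmenting path ending at `x`. -/
noncomputable def simRowAdj : V ⊕ V → V → ℝ
  | Sum.inl i, a => if a = i then 1 else 0
  | Sum.inr _, _ => 0

/-- Column-sum adjustment prescribed by an augmenting path ending at `x`. -/
noncomputable def simColAdj (j0 : V) : V ⊕ V → V → ℝ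
  | Sum.inl _, b => if b = j0 then 1 else 0
  | Sum.inr j, b => (if b = j0 then 1 else 0) - (if b = j then 1 else 0)

lemma simAug {G : V → V → Prop} {f : V → V → ℝ} {j0 : V}
    (hnn : ∀ a b, 0 ≤ f a b) (hsupp : ∀ a b, ¬ G a b → f a b = 0) :
    ∀ x : V ⊕ V, SimReach G f j0 x →
      ∃ C δ : ℝ, 0 ≤ C ∧ 0 < δ ∧ ∀ ε : ℝ, 0 < ε → ε ≤ δ →
        ∃ f' : V → V → ℝ,
          (∀ a b, 0 ≤ f' a b) ∧
          (∀ a b, f a b - C * ε ≤ f' a b) ∧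
          (∀ a b, ¬ G a b → f' a b = 0) ∧
          (∀ a, ∑ b, f' a b = ∑ b, f a b + ε * simRowAdj x a) ∧
          (∀ b, ∑ a, f' a b = ∑ a, f a b + ε * simColAdj j0 x b) := by
  intro x hx
  induction hx with
  | base =>
    refine ⟨0, 1, le_refl 0, one_pos, fun ε hε hε1 => ⟨f, hnn, ?_, hsupp, ?_, ?_⟩⟩
    · intro a b; simp
    · intro a; simp [simRowAdj]
    · intro b; simp [simColAdj]
  | toA hr hG ih =>
    rename_i i j
    obtain ⟨C, δ, hC, hδ, H⟩ := ih
    refine ⟨C, δ, hC, hδ, fun ε hε hεδ => ?_⟩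
    obtain ⟨f', h1, h2, h3, h4, h5⟩ := H ε hε hεδ
    refine ⟨fun a b => f' a b + if a = i ∧ b = j then ε else 0, ?_, ?_, ?_, ?_, ?_⟩
    · intro a b; dsimp only; have := h1 a b; split_ifs <;> linarith
    · intro a b; dsimp only; have := h2 a b; split_ifs <;> linarith
    · intro a b hab
      have hne : ¬(a = i ∧ b = j) := by
        rintro ⟨rfl, rfl⟩; exact hab hG
      dsimp only
      rw [if_neg hne, h3 a b hab, add_zero]
    · intro a
      dsimp only
      rw [Finset.sum_add_distrib, h4 a]
      simp only [simRowAdj]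
      by_cases ha : a = i <;> simp [ha]
    · intro b
      dsimp only
      rw [Finset.sum_add_distrib, h5 b]
      simp only [simColAdj]
      by_cases hjj : j = j0 <;> by_cases hb : b = j <;> by_cases h0 : b = j0 <;>
        simp_all <;> ring
  | toB hr hfij ih =>
    rename_i i j
    obtain ⟨C, δ, hC, hδ, H⟩ := ih
    have hGij : G i j := by
      by_contra h; exact hfij.ne' (hsupp i j h)
    refine ⟨C + 1, min δ (f i j / (C + 1)), by linarith, lt_min hδ (div_pos hfij (by linarith)),
      fun ε hε hεδ => ?_⟩
    obtain ⟨f', h1, h2, h3, h4, h5⟩ := H ε hε (hεδ.trans (min_le_left _ _))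
    have hεf : (C + 1) * ε ≤ f i j := by
      have h := hεδ.trans (min_le_right _ _)
      rw [le_div_iff₀ (by linarith : (0:ℝ) < C + 1)] at h
      linarith
    refine ⟨fun a b => f' a b - if a = i ∧ b = j then ε else 0, ?_, ?_, ?_, ?_, ?_⟩
    · intro a b
      dsimp only
      split_ifs with h
      · obtain ⟨rfl, rfl⟩ := h
        have := h2 a b; linarith
      · have := h1 a b; linarith
    · intro a b; dsimp only; have := h2 a b; split_ifs <;> linarith
    · intro a b hab
      have hne : ¬(a = i ∧ b = j) := by
        rintro ⟨rfl, rfl⟩; exact hab hGij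
      dsimp only
      rw [if_neg hne, h3 a b hab, sub_zero]
    · intro a
      dsimp only
      rw [Finset.sum_sub_distrib, h4 a]
      simp only [simRowAdj]
      by_cases ha : a = i <;> simp [ha]
    · intro b
      dsimp only
      rw [Finset.sum_sub_distrib, h5 b]
      simp only [simColAdj]
      by_cases hjj : j = j0 <;> by_cases hb : b = j <;> by_cases h0 : b = j0 <;>
        simp_all <;> ring

end Aux
open Classical in
/-- Locality implies simulability: if `Z(W) ≤ Y(W) + Y(N(W))` for all `W`,
then `Z = P Y` for some local stochastic matrix `P`. -/
theorem stmt_1 {V : Type*} [Fintype V] [DecidableEq V]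
    (G : V → V → Prop) (hrefl : ∀ i, G i i)
    (Y Z : V → ℝ)
    (hYnn : ∀ i, 0 ≤ Y i) (hY1 : ∑ i, Y i = 1)
    (hZnn : ∀ i, 0 ≤ Z i) (hZ1 : ∑ i, Z i = 1)
    (hlocflow : ∀ W : Finset V,
      ∑ i ∈ W, Z i ≤ ∑ i ∈ W, Y i +
        ∑ i ∈ Finset.univ.filter (fun i => i ∉ W ∧ ∃ j ∈ W, G i j), Y i) :
    ∃ P : Matrix V V ℝ,
      (∀ i j, 0 ≤ P i j) ∧ (∀ i, ∑ j, P j i = 1) ∧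
      (∀ i j, ¬ G i j → P j i = 0) ∧
      P.mulVec Y = Z := by
  classical
  -- the feasible flow polytope
  set K : Set (V → V → ℝ) := {g | (∀ a b, 0 ≤ g a b) ∧ (∀ a b, ¬ G a b → g a b = 0) ∧
    (∀ a, ∑ b, g a b ≤ Y a) ∧ (∀ b, ∑ a, g a b ≤ Z b)} with hKdef
  have hcont : ∀ a b, Continuous fun g : V → V → ℝ => g a b :=
    fun a b => (continuous_apply b).comp (continuous_apply a)
  have hKclosed : IsClosed K := by
    have e : K = (⋂ a, ⋂ b, {g : V → V → ℝ | 0 ≤ g a b}) ∩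
        ((⋂ a, ⋂ b, {g : V → V → ℝ | ¬ G a b → g a b = 0}) ∩
        ((⋂ a, {g : V → V → ℝ | ∑ b, g a b ≤ Y a}) ∩
        (⋂ b, {g : V → V → ℝ | ∑ a, g a b ≤ Z b}))) := by
      ext g
      simp only [hKdef, Set.mem_setOf_eq, Set.mem_inter_iff, Set.mem_iInter]
    rw [e]
    refine IsClosed.inter ?_ (IsClosed.inter ?_ (IsClosed.inter ?_ ?_))
    · exact isClosed_iInter fun a => isClosed_iInter fun b =>
        isClosed_le continuous_const (hcont a b)
    · refine isClosed_iInter fun a => isClosed_iInter fun b => ?_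
      by_cases hg : G a b
      · have : {g : V → V → ℝ | ¬ G a b → g a b = 0} = Set.univ := by
          ext g; simp [hg]
        rw [this]; exact isClosed_univ
      · have : {g : V → V → ℝ | ¬ G a b → g a b = 0} = {g | g a b = 0} := by
          ext g; simp [hg]
        rw [this]; exact isClosed_eq (hcont a b) continuous_const
    · exact isClosed_iInter fun a =>
        isClosed_le (continuous_finset_sum _ fun b _ => hcont a b) continuous_const
    · exact isClosed_iInter fun b =>
        isClosed_le (continuous_finset_sum _ fun a _ => hcont a b) continuous_const
  have hZle1 : ∀ b, Z b ≤ 1 := by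
    intro b
    have : Z b ≤ ∑ i, Z i := Finset.single_le_sum (fun i _ => hZnn i) (Finset.mem_univ b)
    linarith
  have hsub : K ⊆ Set.univ.pi fun _ : V => Set.univ.pi fun _ : V => Set.Icc (0:ℝ) 1 := by
    intro g hg
    obtain ⟨h1, h2, h3, h4⟩ := hg
    refine Set.mem_univ_pi.mpr fun a => Set.mem_univ_pi.mpr fun b => ⟨h1 a b, ?_⟩
    have hb1 : g a b ≤ ∑ a', g a' b :=
      Finset.single_le_sum (fun a' _ => h1 a' b) (Finset.mem_univ a)
    have := h4 b
    have := hZle1 b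
    linarith
  have hKcomp : IsCompact K :=
    (isCompact_univ_pi fun _ => isCompact_univ_pi fun _ => isCompact_Icc).of_isClosed_subset
      hKclosed hsub
  have h0K : (fun _ _ => (0:ℝ)) ∈ K := by
    refine ⟨fun a b => le_refl 0, fun a b _ => rfl, ?_, ?_⟩
    · intro a; simpa using hYnn a
    · intro b; simpa using hZnn b
  have hFcont : Continuous fun g : V → V → ℝ => ∑ a, ∑ b, g a b :=
    continuous_finset_sum _ fun a _ => continuous_finset_sum _ fun b _ => hcont a b
  obtain ⟨f, hfK, hfmax⟩ := hKcomp.exists_isMaxOn ⟨_, h0K⟩ hFcont.continuousOn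
  obtain ⟨hfnn, hfsupp, hfrow, hfcol⟩ := hfK
  -- every column of the maximum flow is saturated
  have hcolEq : ∀ b, ∑ a, f a b = Z b := by
    by_contra hcon
    push_neg at hcon
    obtain ⟨j0, hj0⟩ := hcon
    have hj0lt : ∑ a, f a j0 < Z j0 := (hfcol j0).lt_of_ne hj0
    set RB : Finset V := Finset.univ.filter fun j => SimReach G f j0 (Sum.inr j) with hRB
    set RA : Finset V := Finset.univ.filter fun i => SimReach G f j0 (Sum.inl i) with hRA
    have hsat : ∀ i ∈ RA, ∑ b, f i b = Y i := by
      intro i hi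
      by_contra hne
      have hlt : ∑ b, f i b < Y i := (hfrow i).lt_of_ne hne
      have hreach : SimReach G f j0 (Sum.inl i) := (Finset.mem_filter.mp hi).2
      obtain ⟨C, δ, hC, hδ, H⟩ := simAug hfnn hfsupp _ hreach
      set ε := min δ (min (Y i - ∑ b, f i b) (Z j0 - ∑ a, f a j0)) with hε
      have hεpos : 0 < ε := lt_min hδ (lt_min (by linarith) (by linarith))
      obtain ⟨f', h1, h2, h3, h4, h5⟩ := H ε hεpos (min_le_left _ _)
      have hf'K : f' ∈ K := by
        refine ⟨h1, h3, ?_, ?_⟩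
        · intro a
          rw [h4 a]
          simp only [simRowAdj]
          by_cases ha : a = i
          · have hle : ε ≤ Y i - ∑ b, f i b := (min_le_right _ _).trans (min_le_left _ _)
            subst ha; simp; linarith
          · simp [ha]; exact hfrow a
        · intro b
          rw [h5 b]
          simp only [simColAdj]
          by_cases hb : b = j0
          · have hle : ε ≤ Z j0 - ∑ a, f a j0 := (min_le_right _ _).trans (min_le_right _ _)
            subst hb; simp; linarith
          · simp [hb]; exact hfcol b
      have hle : ∑ a, ∑ b, f' a b ≤ ∑ a, ∑ b, f a b := hfmax hf'K
      have hgt : ∑ a, ∑ b, f' a b = ∑ a, ∑ b, f a b + ε := by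
        have e1 : ∑ a, ∑ b, f' a b
            = ∑ a, (∑ b, f a b + ε * simRowAdj (Sum.inl i) a) :=
          Finset.sum_congr rfl fun a _ => h4 a
        rw [e1, Finset.sum_add_distrib]
        simp [simRowAdj, mul_ite, Finset.sum_ite_eq']
      linarith
    -- the cut argument
    set Γ : Finset V := Finset.univ.filter fun i => ∃ j ∈ RB, G i j with hΓ
    have hΓRA : Γ ⊆ RA := by
      intro i hi
      simp only [hΓ, Finset.mem_filter] at hi
      obtain ⟨-, j, hj, hGij⟩ := hi
      simp only [hRA, Finset.mem_filter]
      exact ⟨Finset.mem_univ i, SimReach.toA (Finset.mem_filter.mp hj).2 hGij⟩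
    have hRBsubΓ : RB ⊆ Γ := by
      intro j hj
      simp only [hΓ, Finset.mem_filter]
      exact ⟨Finset.mem_univ j, j, hj, hrefl j⟩
    have hN : Γ \ RB = Finset.univ.filter fun i => i ∉ RB ∧ ∃ j ∈ RB, G i j := by
      ext i
      simp only [hΓ, Finset.mem_sdiff, Finset.mem_filter, Finset.mem_univ, true_and]
      tauto
    have hcut : ∑ j ∈ RB, Z j ≤ ∑ i ∈ Γ, Y i := by
      have h2 : ∑ i ∈ Γ \ RB, Y i + ∑ i ∈ RB, Y i = ∑ i ∈ Γ, Y i :=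
        Finset.sum_sdiff hRBsubΓ
      rw [hN] at h2
      have := hlocflow RB
      linarith
    have hYRA : ∑ i ∈ Γ, Y i ≤ ∑ i ∈ RA, Y i :=
      Finset.sum_le_sum_of_subset_of_nonneg hΓRA (fun i _ _ => hYnn i)
    have hRAflow : ∑ i ∈ RA, Y i = ∑ i ∈ RA, ∑ b ∈ RB, f i b := by
      refine Finset.sum_congr rfl fun i hi => ?_
      rw [← hsat i hi]
      refine (Finset.sum_subset RB.subset_univ ?_).symm
      intro b _ hb
      rcases (hfnn i b).eq_or_lt with h | h
      · exact h.symm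
      · exfalso
        apply hb
        simp only [hRB, Finset.mem_filter]
        exact ⟨Finset.mem_univ b, SimReach.toB (Finset.mem_filter.mp hi).2 h⟩
    have hswap : ∑ i ∈ RA, ∑ b ∈ RB, f i b ≤ ∑ b ∈ RB, ∑ a, f a b := by
      rw [Finset.sum_comm]
      exact Finset.sum_le_sum fun b _ =>
        Finset.sum_le_sum_of_subset_of_nonneg RA.subset_univ fun a _ _ => hfnn a b
    have hstrict : ∑ b ∈ RB, ∑ a, f a b < ∑ b ∈ RB, Z b := by
      refine Finset.sum_lt_sum (fun b _ => hfcol b) ⟨j0, ?_, hj0lt⟩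
      simp only [hRB, Finset.mem_filter]
      exact ⟨Finset.mem_univ j0, SimReach.base⟩
    linarith
  have htot : ∑ a, ∑ b, f a b = 1 := by
    calc ∑ a, ∑ b, f a b = ∑ b, ∑ a, f a b := Finset.sum_comm
      _ = ∑ b, Z b := Finset.sum_congr rfl fun b _ => hcolEq b
      _ = 1 := hZ1
  have hrowEq : ∀ a, ∑ b, f a b = Y a := by
    have hzero : ∑ a, (Y a - ∑ b, f a b) = 0 := by
      rw [Finset.sum_sub_distrib, hY1, htot]; ring
    intro a
    have := (Finset.sum_eq_zero_iff_of_nonneg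
      (fun i _ => sub_nonneg.mpr (hfrow i))).mp hzero a (Finset.mem_univ a)
    linarith
  -- build the stochastic matrix
  refine ⟨Matrix.of fun j i => if Y i = 0 then (if j = i then 1 else 0) else f i j / Y i,
    ?_, ?_, ?_, ?_⟩
  · intro i j
    simp only [Matrix.of_apply]
    split_ifs
    · exact zero_le_one
    · exact le_refl 0
    · exact div_nonneg (hfnn j i) (hYnn j)
  · intro i
    simp only [Matrix.of_apply]
    by_cases hYi : Y i = 0
    · simp [hYi]
    · simp only [hYi, if_false]
      rw [← Finset.sum_div, hrowEq i, div_self hYi]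
  · intro i j hGij
    simp only [Matrix.of_apply]
    by_cases hYi : Y i = 0
    · rw [if_pos hYi, if_neg]
      rintro rfl
      exact hGij (hrefl _)
    · rw [if_neg hYi, hfsupp i j hGij, zero_div]
  · funext j
    simp only [Matrix.mulVec, dotProduct, Matrix.of_apply]
    rw [← hcolEq j]
    refine Finset.sum_congr rfl fun i _ => ?_
    by_cases hYi : Y i = 0
    · rw [if_pos hYi, hYi, mul_zero]
      have h1 : f i j ≤ ∑ b, f i b :=
        Finset.single_le_sum (fun b _ => hfnn i b) (Finset.mem_univ j)
      rw [hrowEq i, hYi] at h1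
      have := hfnn i j
      linarith
    · rw [if_neg hYi, div_mul_cancel₀ _ hYi]
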